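/- For every n ≥ 4, the graph Cay(Z_n × R_2, {1} × R_2) ≅ C_n[K̄_2] contains a subdivision of K_{3,3}, and hence is not planar. -/

import Mathlib

open SimpleGraph

variable {V : Type*}

/-- Dart reversal as a permutation of the darts of a graph. -/
def dartSymm (G : SimpleGraph V) : Equiv.Perm G.Dart :=
  ⟨SimpleGraph.Dart.symm, SimpleGraph.Dart.symm,
    fun d => SimpleGraph.Dart.symm_symm d, fun d => SimpleGraph.Dart.symm_symm d⟩

/-- A rotation system (combinatorial 2-cell embedding into an orientable surface)
of a graph: a permutation of the darts fixing tails, whose cycle at each vertex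
consists of all darts with that tail. -/
structure RotationSystem (G : SimpleGraph V) where
  rot : Equiv.Perm G.Dart
  tail_rot : ∀ d : G.Dart, (rot d).toProd.1 = d.toProd.1
  single_cycle : ∀ d d' : G.Dart, d.toProd.1 = d'.toProd.1 → rot.SameCycle d d'

/-- The face permutation of a rotation system: first reverse a dart, then rotate. -/
noncomputable def RotationSystem.facePerm {G : SimpleGraph V} (rs : RotationSystem G) :
    Equiv.Perm G.Dart :=
  (dartSymm G).trans rs.rot

/-- The faces of the embedding are the cycles of the face permutation. -/
noncomputable def RotationSystem.numFaces {G : SimpleGraph V} (rs : RotationSystem G) : ℕ :=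
  Set.ncard (Set.range fun d : G.Dart => {d' | rs.facePerm.SameCycle d d'})

/-- The Euler characteristic `n - m + f` of the embedded graph. -/
noncomputable def RotationSystem.eulerChar {G : SimpleGraph V} (rs : RotationSystem G) : ℤ :=
  (Nat.card V : ℤ) - (G.edgeSet.ncard : ℤ) + (rs.numFaces : ℤ)

/-- The genus of the embedding, via `n - m + f = 2 - 2g`. -/
noncomputable def RotationSystem.genus {G : SimpleGraph V} (rs : RotationSystem G) : ℤ :=
  (2 - rs.eulerChar) / 2

/-- The undirected simple Cayley graph of a semigroup `S` with connection set `C`. -/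
def cayleyGraph (S : Type*) [Semigroup S] (C : Set S) : SimpleGraph S where
  Adj a b := a ≠ b ∧ ∃ c ∈ C, (a * c = b ∨ b * c = a)
  symm := ⟨by
    rintro a b ⟨hne, c, hc, h⟩
    exact ⟨hne.symm, c, hc, h.symm⟩⟩
  loopless := ⟨fun a h => h.1 rfl⟩

/-- The lexicographic product of simple graphs. -/
def lexProd {α β : Type*} (X : SimpleGraph α) (Y : SimpleGraph β) :
    SimpleGraph (α × β) where
  Adj p q := X.Adj p.1 q.1 ∨ (p.1 = q.1 ∧ Y.Adj p.2 q.2)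
  symm := ⟨by
    rintro p q (h | ⟨h, h'⟩)
    · exact Or.inl h.symm
    · exact Or.inr ⟨h.symm, h'.symm⟩⟩
  loopless := ⟨by
    rintro p (h | ⟨-, h⟩)
    · exact X.loopless.irrefl _ h
    · exact Y.loopless.irrefl _ h⟩

/-- `G` contains a subdivision of `H`: there are branch vertices given by an
injective map `f` and internally disjoint paths in `G` joining the images of
the endpoints of each edge of `H`. -/
def ContainsSubdivision {α β : Type*} (H : SimpleGraph α) (G : SimpleGraph β) : Prop :=
  ∃ (f : α → β) (P : ∀ ⦃u v : α⦄, H.Adj u v → G.Walk (f u) (f v)),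
    Function.Injective f ∧
    (∀ ⦃u v⦄ (h : H.Adj u v), (P h).IsPath) ∧
    (∀ ⦃u v⦄ (h : H.Adj u v) (x : β),
      x ∈ (P h).support → x ∈ Set.range f → x = f u ∨ x = f v) ∧
    (∀ ⦃u v u' v'⦄ (h : H.Adj u v) (h' : H.Adj u' v'), s(u, v) ≠ s(u', v') →
      ∀ x : β, x ∈ (P h).support → x ∈ (P h').support →
        (x = f u ∨ x = f v) ∧ (x = f u' ∨ x = f v'))
section Aux
variable {n : ℕ}

/-- Abbreviation for the graph `C_n[K̄_2]`. -/
abbrev GG (n : ℕ) : SimpleGraph (Fin n × Fin 2) :=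
  lexProd (SimpleGraph.cycleGraph n) (⊥ : SimpleGraph (Fin 2))

lemma GG_adj {p q : Fin n × Fin 2} :
    (GG n).Adj p q ↔ (SimpleGraph.cycleGraph n).Adj p.1 q.1 := by
  constructor
  · rintro (h | ⟨-, h⟩)
    · exact h
    · exact absurd h (by simp)
  · exact Or.inl

lemma mod2_cases (hn : 0 < n) (s : ℕ) (hs : s < 2 * n) :
    s % n = s ∨ (s % n = s - n ∧ n ≤ s) := by
  rcases Nat.lt_or_ge s n with h | h
  · exact Or.inl (Nat.mod_eq_of_lt h)
  · refine Or.inr ⟨?_, h⟩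
    rw [Nat.mod_eq_sub_mod h, Nat.mod_eq_of_lt (by omega)]

lemma sub_val_one (hn : 4 ≤ n) {x y : Fin n} (h : (x - y).val = 1) :
    x.val = y.val + 1 ∨ (y.val = n - 1 ∧ x.val = 0) := by
  rw [Fin.sub_def] at h
  simp only [Fin.val_mk] at h
  have hx := x.isLt; have hy := y.isLt
  rcases mod2_cases (n := n) (by omega) (n - y.val + x.val) (by omega) with h' | ⟨h', h''⟩ <;>
    rw [h'] at h <;> omega

lemma cyc_adj_cases (hn : 4 ≤ n) {x y : Fin n}
    (h : (SimpleGraph.cycleGraph n).Adj x y) :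
    x.val = y.val + 1 ∨ (y.val = n - 1 ∧ x.val = 0) ∨
      y.val = x.val + 1 ∨ (x.val = n - 1 ∧ y.val = 0) := by
  rw [SimpleGraph.cycleGraph_adj'] at h
  rcases h with h | h
  · rcases sub_val_one hn h with h | h
    · exact Or.inl h
    · exact Or.inr (Or.inl h)
  · rcases sub_val_one hn h with h | h
    · exact Or.inr (Or.inr (Or.inl h))
    · exact Or.inr (Or.inr (Or.inr h))

lemma cyc_triangle_free (hn : 4 ≤ n) {a b c : Fin n}
    (h1 : (SimpleGraph.cycleGraph n).Adj a b)
    (h2 : (SimpleGraph.cycleGraph n).Adj b c)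
    (h3 : (SimpleGraph.cycleGraph n).Adj c a) : False := by
  have ha := a.isLt; have hb := b.isLt; have hc := c.isLt
  rcases cyc_adj_cases hn h1 with h1' | h1' | h1' | h1' <;>
  rcases cyc_adj_cases hn h2 with h2' | h2' | h2' | h2' <;>
  rcases cyc_adj_cases hn h3 with h3' | h3' | h3' | h3' <;> omega

lemma GG_triangle_free (hn : 4 ≤ n) {p q r : Fin n × Fin 2}
    (h1 : (GG n).Adj p q) (h2 : (GG n).Adj q r) (h3 : (GG n).Adj r p) : False :=
  cyc_triangle_free hn (GG_adj.mp h1) (GG_adj.mp h2) (GG_adj.mp h3)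

lemma cyc_adj_succ (hn : 4 ≤ n) {a b : Fin n} (h : (a.val + 1) % n = b.val) :
    (SimpleGraph.cycleGraph n).Adj a b := by
  rw [SimpleGraph.cycleGraph_adj']
  right
  rw [Fin.sub_def]
  simp only [Fin.val_mk]
  have ha := a.isLt; have hb := b.isLt
  rcases Nat.lt_or_ge (a.val + 1) n with h' | h'
  · rw [Nat.mod_eq_of_lt h'] at h
    have e : n - a.val + b.val = n + 1 := by omega
    rw [e, Nat.add_mod_left, Nat.mod_eq_of_lt (by omega)]
  · have : a.val + 1 = n := by omega
    rw [this, Nat.mod_self] at h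
    have e : n - a.val + b.val = 1 := by omega
    rw [e, Nat.mod_eq_of_lt (by omega)]

lemma GG_adj_succ (hn : 4 ≤ n) {a b : Fin n} {i j : Fin 2}
    (h : (a.val + 1) % n = b.val ∨ (b.val + 1) % n = a.val) :
    (GG n).Adj (a, i) (b, j) :=
  GG_adj.mpr (h.elim (cyc_adj_succ hn) (fun h => (cyc_adj_succ hn h).symm))

end Aux
section Count
open SimpleGraph
variable {n : ℕ}

instance GG_decAdj : DecidableRel (GG n).Adj := fun p q =>
  decidable_of_iff _ GG_adj.symm

/-- Darts of `GG n` correspond to darts of the cycle together with two labels. -/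
def GG_dartEquiv : (GG n).Dart ≃ ((SimpleGraph.cycleGraph n).Dart × (Fin 2 × Fin 2)) where
  toFun d := (⟨(d.toProd.1.1, d.toProd.2.1), GG_adj.mp d.adj⟩, (d.toProd.1.2, d.toProd.2.2))
  invFun e := ⟨((e.1.toProd.1, e.2.1), (e.1.toProd.2, e.2.2)), GG_adj.mpr e.1.adj⟩
  left_inv d := by
    apply SimpleGraph.Dart.ext
    rfl
  right_inv e := by
    obtain ⟨⟨⟨a, b⟩, h⟩, i, j⟩ := e
    rfl

lemma GG_dart_card (hn : 4 ≤ n) : Fintype.card (GG n).Dart = 8 * n := by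
  rw [Fintype.card_congr GG_dartEquiv, Fintype.card_prod, Fintype.card_prod,
    Fintype.card_fin]
  have hdeg : ∀ v : Fin n, (SimpleGraph.cycleGraph n).degree v = 2 := by
    obtain ⟨m, rfl⟩ : ∃ m, n = m + 1 + 3 := ⟨n - 4, by omega⟩
    exact fun v => SimpleGraph.cycleGraph_degree_three_le
  rw [SimpleGraph.dart_card_eq_sum_degrees]
  simp only [hdeg]
  rw [Finset.sum_const, Finset.card_univ, Fintype.card_fin]
  ring

lemma GG_edge_card (hn : 4 ≤ n) : (GG n).edgeSet.ncard = 4 * n := by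
  have h1 : (GG n).edgeSet.ncard = (GG n).edgeFinset.card := by
    rw [SimpleGraph.edgeFinset, Set.ncard_eq_toFinset_card']
  have h2 := SimpleGraph.dart_card_eq_twice_card_edges (G := GG n)
  rw [GG_dart_card hn] at h2
  omega

/-- Counting bound: if a permutation has no cycles of length `< 4`, then
`4 * (number of cycles) ≤ card`. -/
lemma orbit_bound {α : Type*} [Fintype α] [DecidableEq α] (σ : Equiv.Perm α)
    (h1 : ∀ d, σ d ≠ d) (h2 : ∀ d, σ (σ d) ≠ d) (h3 : ∀ d, σ (σ (σ d)) ≠ d) :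
    4 * Set.ncard (Set.range fun d => {d' | σ.SameCycle d d'}) ≤ Fintype.card α := by
  classical
  set F : α → Finset α := fun d => Finset.univ.filter (fun d' => σ.SameCycle d d') with hF
  have hmemF : ∀ d x, x ∈ F d ↔ σ.SameCycle d x := by
    intro d x; simp [hF]
  have hFeq : ∀ d e, σ.SameCycle d e → F d = F e := by
    intro d e hde
    ext x
    rw [hmemF, hmemF]
    exact ⟨fun h => hde.symm.trans h, fun h => hde.trans h⟩
  set T : Finset (Finset α) := Finset.image F Finset.univ with hT
  -- identify the ncard with T.card
  have hrange : (Set.range fun d => {d' | σ.SameCycle d d'}) =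
      (fun s : Finset α => (↑s : Set α)) '' (↑T : Set (Finset α)) := by
    ext S
    constructor
    · rintro ⟨d, rfl⟩
      exact ⟨F d, by simp [hT], by ext x; simp [hmemF]⟩
    · rintro ⟨s, hs, rfl⟩
      simp only [hT, Finset.coe_image, Set.mem_image, Finset.coe_univ, Set.image_univ,
        Set.mem_range] at hs
      obtain ⟨d, rfl⟩ := hs
      exact ⟨d, by ext x; simp [hmemF]⟩
  have hncard : Set.ncard (Set.range fun d => {d' | σ.SameCycle d d'}) = T.card := by
    rw [hrange, Set.ncard_image_of_injective _ Finset.coe_injective, Set.ncard_coe_finset]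
  rw [hncard]
  -- the sets in T partition the universe
  have hdisj : ∀ t ∈ T, ∀ s ∈ T, t ≠ s → Disjoint t s := by
    intro t ht s hs hts
    simp only [hT, Finset.mem_image] at ht hs
    obtain ⟨d, -, rfl⟩ := ht
    obtain ⟨e, -, rfl⟩ := hs
    rw [Finset.disjoint_left]
    intro x hxd hxe
    rw [hmemF] at hxd hxe
    exact hts (hFeq _ _ (hxd.trans hxe.symm))
  have hcover : T.biUnion id = Finset.univ := by
    ext a
    simp only [Finset.mem_biUnion, Finset.mem_univ, iff_true, id]
    exact ⟨F a, by simp [hT], (hmemF a a).mpr (Equiv.Perm.SameCycle.refl _ _)⟩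
  have hsum : ∑ t ∈ T, t.card = Fintype.card α := by
    rw [← Finset.card_biUnion hdisj]
    have h' : (T.biUnion fun x => x) = Finset.univ := hcover
    rw [h', Finset.card_univ]
  -- each cycle has at least 4 elements
  have hbig : ∀ t ∈ T, 4 ≤ t.card := by
    intro t ht
    simp only [hT, Finset.mem_image] at ht
    obtain ⟨d, -, rfl⟩ := ht
    have i1 : d ≠ σ d := fun h => h1 d h.symm
    have i2 : d ≠ σ (σ d) := fun h => h2 d h.symm
    have i3 : d ≠ σ (σ (σ d)) := fun h => h3 d h.symm
    have i4 : σ d ≠ σ (σ d) := fun h => i1 (σ.injective h)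
    have i5 : σ d ≠ σ (σ (σ d)) := fun h => i2 (σ.injective h)
    have i6 : σ (σ d) ≠ σ (σ (σ d)) := fun h => i1 (σ.injective (σ.injective h))
    have hsub : ({d, σ d, σ (σ d), σ (σ (σ d))} : Finset α) ⊆ F d := by
      intro x hx
      rw [hmemF]
      simp only [Finset.mem_insert, Finset.mem_singleton] at hx
      rcases hx with rfl | rfl | rfl | rfl
      · exact Equiv.Perm.SameCycle.refl _ _
      · exact ⟨1, by simp⟩
      · exact ⟨2, by simp [pow_succ, zpow_ofNat]⟩
      · exact ⟨3, by simp [pow_succ, zpow_ofNat]⟩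
    have hcard : ({d, σ d, σ (σ d), σ (σ (σ d))} : Finset α).card = 4 := by
      rw [Finset.card_insert_of_notMem (by simp [i1, i2, i3]),
        Finset.card_insert_of_notMem (by simp [i4, i5]),
        Finset.card_insert_of_notMem (by simp [i6]),
        Finset.card_singleton]
    calc 4 = ({d, σ d, σ (σ d), σ (σ (σ d))} : Finset α).card := hcard.symm
    _ ≤ (F d).card := Finset.card_le_card hsub
  calc 4 * T.card = ∑ _t ∈ T, 4 := by rw [Finset.sum_const]; ring
  _ ≤ ∑ t ∈ T, t.card := Finset.sum_le_sum hbig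
  _ = Fintype.card α := hsum

end Count
section Faces
open SimpleGraph
variable {n : ℕ}

lemma rot_no_fixed (hn : 4 ≤ n) (rs : RotationSystem (GG n)) (e : (GG n).Dart) :
    rs.rot e ≠ e := by
  intro hfix
  -- another dart with the same tail as e
  have hadj : (GG n).Adj e.toProd.1 (e.toProd.2.1, e.toProd.2.2 + 1) :=
    GG_adj.mpr (GG_adj.mp e.adj)
  set e' : (GG n).Dart := ⟨(e.toProd.1, (e.toProd.2.1, e.toProd.2.2 + 1)), hadj⟩ with he'
  have hne : e' ≠ e := by
    intro h
    have h2 := congrArg (fun d : (GG n).Dart => d.toProd.2.2) h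
    have h3 : ∀ x : Fin 2, x + 1 ≠ x := by decide
    exact h3 e.toProd.2.2 h2
  have hsc := rs.single_cycle e e' rfl
  obtain ⟨k, hk⟩ := hsc
  rw [Equiv.Perm.zpow_apply_eq_self_of_apply_eq_self hfix k] at hk
  exact hne hk.symm

lemma facePerm_tail {G : SimpleGraph V} (rs : RotationSystem G) (d : G.Dart) :
    (rs.facePerm d).toProd.1 = d.toProd.2 := by
  show (rs.rot (dartSymm G d)).toProd.1 = d.toProd.2
  rw [rs.tail_rot]
  rfl

lemma fp_ne1 (hn : 4 ≤ n) (rs : RotationSystem (GG n)) (d : (GG n).Dart) :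
    rs.facePerm d ≠ d := by
  intro h
  have := facePerm_tail rs d
  rw [h] at this
  exact (GG n).ne_of_adj d.adj this

lemma fp_ne2 (hn : 4 ≤ n) (rs : RotationSystem (GG n)) (d : (GG n).Dart) :
    rs.facePerm (rs.facePerm d) ≠ d := by
  intro h
  set e := rs.facePerm d with he
  have h1 : e.toProd.1 = d.toProd.2 := facePerm_tail rs d
  have h2 : d.toProd.1 = e.toProd.2 := by
    conv_lhs => rw [← h]
    exact facePerm_tail rs e
  have hed : e = d.symm := by
    apply SimpleGraph.Dart.ext
    exact Prod.ext h1 h2.symm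
  have : rs.rot d.symm = d.symm := by
    calc rs.rot d.symm = rs.facePerm d := rfl
    _ = e := he.symm
    _ = d.symm := hed
  exact rot_no_fixed hn rs d.symm this

lemma fp_ne3 (hn : 4 ≤ n) (rs : RotationSystem (GG n)) (d : (GG n).Dart) :
    rs.facePerm (rs.facePerm (rs.facePerm d)) ≠ d := by
  intro h
  set e := rs.facePerm d with he
  set g := rs.facePerm e with hg
  have h1 : e.toProd.1 = d.toProd.2 := facePerm_tail rs d
  have h2 : g.toProd.1 = e.toProd.2 := facePerm_tail rs e
  have h3 : d.toProd.1 = g.toProd.2 := by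
    conv_lhs => rw [← h]
    exact facePerm_tail rs g
  -- triangle d.1 → d.2 → e.2 → d.1
  have had : (GG n).Adj d.toProd.1 d.toProd.2 := d.adj
  have hae : (GG n).Adj d.toProd.2 e.toProd.2 := by rw [← h1]; exact e.adj
  have hag : (GG n).Adj e.toProd.2 d.toProd.1 := by rw [← h2, h3]; exact g.adj
  exact GG_triangle_free hn had hae hag

lemma no_planar_embedding (hn : 4 ≤ n) :
    ¬ ∃ rs : RotationSystem (GG n), rs.eulerChar = 2 := by
  rintro ⟨rs, hrs⟩
  have hb := orbit_bound rs.facePerm (fp_ne1 hn rs) (fp_ne2 hn rs) (fp_ne3 hn rs)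
  rw [GG_dart_card hn] at hb
  have hfaces : 4 * rs.numFaces ≤ 8 * n := hb
  have hV : Nat.card (Fin n × Fin 2) = 2 * n := by
    rw [Nat.card_eq_fintype_card, Fintype.card_prod, Fintype.card_fin, Fintype.card_fin]
    ring
  rw [RotationSystem.eulerChar, hV, GG_edge_card hn] at hrs
  omega

end Faces
section Subdiv
open SimpleGraph
variable {n : ℕ}

/-- The `j`-th vertex (counting backwards from `n`) on the bottom cycle. -/
abbrev vtx (n : ℕ) [NeZero n] (j : ℕ) : Fin n × Fin 2 :=
  (⟨(n - j) % n, Nat.mod_lt _ (Nat.pos_of_ne_zero (NeZero.ne n))⟩, 0)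

lemma step_mod (hn : 4 ≤ n) (j : ℕ) (h : j + 1 ≤ n - 3) :
    ((n - (j+1)) % n + 1) % n = (n - j) % n := by
  have h1 : n - (j+1) < n := by omega
  rw [Nat.mod_eq_of_lt h1]
  rcases Nat.eq_zero_or_pos j with rfl | hj
  · have e : n - (0+1) + 1 = n := by omega
    rw [e, Nat.mod_self, Nat.sub_zero, Nat.mod_self]
  · have e : n - (j+1) + 1 = n - j := by omega
    rw [e]

/-- A walk along the bottom cycle from `vtx n j` back to `vtx n 0 = (0,0)`. -/
def walkAux (n : ℕ) [NeZero n] (hn : 4 ≤ n) :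
    (j : ℕ) → j ≤ n - 3 → (GG n).Walk (vtx n j) (vtx n 0)
  | 0, _ => SimpleGraph.Walk.nil
  | j+1, h => SimpleGraph.Walk.cons
      (GG_adj_succ hn (Or.inl (step_mod hn j h))) (walkAux n hn j (by omega))

lemma vtxval [NeZero n] (hn : 4 ≤ n) {i : ℕ} (hi : i ≤ n - 3) :
    (vtx n i).1.val = if i = 0 then 0 else n - i := by
  rcases Nat.eq_zero_or_pos i with rfl | h
  · simp [Nat.mod_self]
  · rw [if_neg (by omega), Fin.val_mk, Nat.mod_eq_of_lt (by omega)]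

lemma walkAux_support [NeZero n] (hn : 4 ≤ n) :
    ∀ (j : ℕ) (h : j ≤ n - 3) (x : Fin n × Fin 2),
      x ∈ (walkAux n hn j h).support → ∃ i ≤ j, x = vtx n i
  | 0, h, x, hx => by
    simp only [walkAux, SimpleGraph.Walk.support_nil, List.mem_singleton] at hx
    exact ⟨0, le_refl 0, hx⟩
  | j+1, h, x, hx => by
    rw [walkAux, SimpleGraph.Walk.support_cons] at hx
    rcases List.mem_cons.mp hx with rfl | hx
    · exact ⟨j+1, le_rfl, rfl⟩
    · obtain ⟨i, hi, rfl⟩ := walkAux_support hn j (by omega) x hx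
      exact ⟨i, by omega, rfl⟩

lemma walkAux_isPath [NeZero n] (hn : 4 ≤ n) :
    ∀ (j : ℕ) (h : j ≤ n - 3), (walkAux n hn j h).IsPath
  | 0, h => by simp [walkAux]
  | j+1, h => by
    rw [walkAux, SimpleGraph.Walk.cons_isPath_iff]
    refine ⟨walkAux_isPath hn j (by omega), fun hx => ?_⟩
    obtain ⟨i, hi, hveq⟩ := walkAux_support hn j (by omega) _ hx
    have h1 : (vtx n (j+1)).1.val = (vtx n i).1.val := by rw [hveq]
    rw [vtxval hn (show j+1 ≤ n-3 from h), vtxval hn (show i ≤ n-3 by omega)] at h1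
    rw [if_neg (show ¬ j+1 = 0 by omega)] at h1
    rcases Nat.eq_zero_or_pos i with rfl | hipos
    · rw [if_pos rfl] at h1; omega
    · rw [if_neg (show ¬ i = 0 by omega)] at h1; omega

/-- The branch vertices of the `K_{3,3}` subdivision. -/
def bvtx (n : ℕ) (hn : 4 ≤ n) : Fin 3 ⊕ Fin 3 → Fin n × Fin 2
  | .inl ⟨0, _⟩ => (⟨1, by omega⟩, 0)
  | .inl ⟨1, _⟩ => (⟨1, by omega⟩, 1)
  | .inl ⟨_+2, _⟩ => (⟨3, by omega⟩, 0)
  | .inr ⟨0, _⟩ => (⟨0, by omega⟩, 0)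
  | .inr ⟨1, _⟩ => (⟨2, by omega⟩, 0)
  | .inr ⟨_+2, _⟩ => (⟨2, by omega⟩, 1)

lemma small_mod (hn : 4 ≤ n) {a b : ℕ} (h : a + 1 = b) (hb : b ≤ 3) : (a + 1) % n = b := by
  rw [h, Nat.mod_eq_of_lt (by omega)]

lemma vtx_n3 [NeZero n] (hn : 4 ≤ n) : vtx n (n-3) = ((⟨3, by omega⟩ : Fin n), 0) := by
  refine Prod.ext (Fin.ext ?_) rfl
  rw [Fin.val_mk, (show n - (n-3) = 3 by omega), Nat.mod_eq_of_lt (by omega)]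

lemma vtx_0 [NeZero n] (hn : 4 ≤ n) : vtx n 0 = ((⟨0, by omega⟩ : Fin n), 0) := by
  refine Prod.ext (Fin.ext ?_) rfl
  rw [Fin.val_mk, Nat.sub_zero, Nat.mod_self]

/-- The subdivision paths for each left-right pair. -/
def WalkLR (n : ℕ) [NeZero n] (hn : 4 ≤ n) :
    (i j : Fin 3) → (GG n).Walk (bvtx n hn (.inl i)) (bvtx n hn (.inr j))
  | ⟨0, _⟩, ⟨0, _⟩ =>
      SimpleGraph.Walk.cons (GG_adj_succ hn (Or.inr (small_mod hn (a := 0) (b := 1) rfl (by omega)))) .nil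
  | ⟨0, _⟩, ⟨1, _⟩ =>
      SimpleGraph.Walk.cons (GG_adj_succ hn (Or.inl (small_mod hn (a := 1) (b := 2) rfl (by omega)))) .nil
  | ⟨0, _⟩, ⟨_+2, _⟩ =>
      SimpleGraph.Walk.cons (GG_adj_succ hn (Or.inl (small_mod hn (a := 1) (b := 2) rfl (by omega)))) .nil
  | ⟨1, _⟩, ⟨0, _⟩ =>
      SimpleGraph.Walk.cons (GG_adj_succ hn (Or.inr (small_mod hn (a := 0) (b := 1) rfl (by omega)))) .nil
  | ⟨1, _⟩, ⟨1, _⟩ =>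
      SimpleGraph.Walk.cons (GG_adj_succ hn (Or.inl (small_mod hn (a := 1) (b := 2) rfl (by omega)))) .nil
  | ⟨1, _⟩, ⟨_+2, _⟩ =>
      SimpleGraph.Walk.cons (GG_adj_succ hn (Or.inl (small_mod hn (a := 1) (b := 2) rfl (by omega)))) .nil
  | ⟨_+2, _⟩, ⟨0, _⟩ =>
      (walkAux n hn (n-3) le_rfl).copy (vtx_n3 hn) (vtx_0 hn)
  | ⟨_+2, _⟩, ⟨1, _⟩ =>
      SimpleGraph.Walk.cons (GG_adj_succ hn (Or.inr (small_mod hn (a := 2) (b := 3) rfl (by omega)))) .nil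
  | ⟨_+2, _⟩, ⟨_+2, _⟩ =>
      SimpleGraph.Walk.cons (GG_adj_succ hn (Or.inr (small_mod hn (a := 2) (b := 3) rfl (by omega)))) .nil

end Subdiv
section Subdiv2
open SimpleGraph
variable {n : ℕ}

lemma bvtx_val_le (hn : 4 ≤ n) : ∀ u, (bvtx n hn u).1.val ≤ 3 := by
  rintro (i | i) <;> fin_cases i <;> simp [bvtx]

lemma bvtx_inj (hn : 4 ≤ n) : Function.Injective (bvtx n hn) := by
  rintro (i | i) (j | j) h <;> fin_cases i <;> fin_cases j <;>
    first
      | rfl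
      | (exfalso; simp only [bvtx, Prod.mk.injEq, Fin.mk.injEq] at h; omega)

lemma WalkLR_support [NeZero n] (hn : 4 ≤ n) (i j : Fin 3) (x : Fin n × Fin 2)
    (hx : x ∈ (WalkLR n hn i j).support) :
    x = bvtx n hn (.inl i) ∨ x = bvtx n hn (.inr j) ∨
      (4 ≤ x.1.val ∧
        (s(Sum.inl i, Sum.inr j) : Sym2 (Fin 3 ⊕ Fin 3)) = s(Sum.inl 2, Sum.inr 0)) := by
  fin_cases i <;> fin_cases j <;>
    simp only [WalkLR, bvtx, SimpleGraph.Walk.support_cons, SimpleGraph.Walk.support_nil,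
      SimpleGraph.Walk.support_copy, List.mem_cons, List.mem_singleton,
      List.not_mem_nil, or_false] at hx
  all_goals try (rcases hx with rfl | rfl; exacts [Or.inl rfl, Or.inr (Or.inl rfl)])
  -- remaining: the long walk (i = 2, j = 0)
  obtain ⟨i, hi, rfl⟩ := walkAux_support hn (n-3) le_rfl x hx
  rcases Nat.eq_zero_or_pos i with rfl | hipos
  · exact Or.inr (Or.inl (vtx_0 hn))
  rcases Nat.eq_or_lt_of_le hi with rfl | hilt
  · exact Or.inl (vtx_n3 hn)
  · refine Or.inr (Or.inr ⟨?_, by decide⟩)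
    rw [vtxval hn hi, if_neg (show ¬ i = 0 by omega)]
    omega

end Subdiv2
section Subdiv3
open SimpleGraph
variable {n : ℕ}

def bigP (n : ℕ) [NeZero n] (hn : 4 ≤ n) :
    ∀ ⦃u v : Fin 3 ⊕ Fin 3⦄, (completeBipartiteGraph (Fin 3) (Fin 3)).Adj u v →
      (GG n).Walk (bvtx n hn u) (bvtx n hn v)
  | .inl i, .inr j, _ => WalkLR n hn i j
  | .inr j, .inl i, _ => (WalkLR n hn i j).reverse
  | .inl _, .inl _, h => absurd h (by simp [completeBipartiteGraph])
  | .inr _, .inr _, h => absurd h (by simp [completeBipartiteGraph])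

lemma WalkLR_isPath [NeZero n] (hn : 4 ≤ n) (i j : Fin 3) : (WalkLR n hn i j).IsPath := by
  fin_cases i <;> fin_cases j <;>
    first
      | (simp only [WalkLR, bvtx, SimpleGraph.Walk.isPath_copy]
         exact walkAux_isPath hn (n-3) le_rfl)
      | (simp only [WalkLR, bvtx]
         rw [SimpleGraph.Walk.cons_isPath_iff]
         refine ⟨SimpleGraph.Walk.IsPath.nil, ?_⟩
         intro hmem
         rw [SimpleGraph.Walk.support_nil, List.mem_singleton] at hmem
         simp only [bvtx, Prod.mk.injEq, Fin.mk.injEq] at hmem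
         omega)

lemma bigP_isPath [NeZero n] (hn : 4 ≤ n) :
    ∀ (u v : Fin 3 ⊕ Fin 3) (h : (completeBipartiteGraph (Fin 3) (Fin 3)).Adj u v),
      (bigP n hn h).IsPath := by
  rintro (i | i) (j | j) h
  · exact absurd h (by simp [completeBipartiteGraph])
  · exact WalkLR_isPath hn i j
  · exact (WalkLR_isPath hn j i).reverse
  · exact absurd h (by simp [completeBipartiteGraph])

lemma bigP_support [NeZero n] (hn : 4 ≤ n) :
    ∀ (u v : Fin 3 ⊕ Fin 3) (h : (completeBipartiteGraph (Fin 3) (Fin 3)).Adj u v)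
      (x : Fin n × Fin 2), x ∈ (bigP n hn h).support →
      x = bvtx n hn u ∨ x = bvtx n hn v ∨
        (4 ≤ x.1.val ∧ (s(u, v) : Sym2 (Fin 3 ⊕ Fin 3)) = s(Sum.inl 2, Sum.inr 0)) := by
  rintro (i | i) (j | j) h x hx
  · exact absurd h (by simp [completeBipartiteGraph])
  · rcases WalkLR_support hn i j x hx with h1 | h1 | ⟨h1, h2⟩
    exacts [Or.inl h1, Or.inr (Or.inl h1), Or.inr (Or.inr ⟨h1, h2⟩)]
  · have hx' : x ∈ (WalkLR n hn j i).support := by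
      rw [show (bigP n hn h) = (WalkLR n hn j i).reverse from rfl,
        SimpleGraph.Walk.support_reverse, List.mem_reverse] at hx
      exact hx
    rcases WalkLR_support hn j i x hx' with h1 | h1 | ⟨h1, h2⟩
    exacts [Or.inr (Or.inl h1), Or.inl h1,
      Or.inr (Or.inr ⟨h1, by rw [Sym2.eq_swap]; exact h2⟩)]
  · exact absurd h (by simp [completeBipartiteGraph])

lemma contains_subdiv (hn : 4 ≤ n) [NeZero n] :
    ContainsSubdivision (completeBipartiteGraph (Fin 3) (Fin 3)) (GG n) := by
  refine ⟨bvtx n hn, bigP n hn, bvtx_inj hn, fun u v h => bigP_isPath hn u v h, ?_, ?_⟩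
  · intro u v h x hx hr
    rcases bigP_support hn u v h x hx with h1 | h1 | ⟨h1, -⟩
    · exact Or.inl h1
    · exact Or.inr h1
    · obtain ⟨w, rfl⟩ := hr
      exact absurd h1 (by have := bvtx_val_le hn w; omega)
  · intro u v u' v' h h' hne x hx hx'
    have hval : ∀ w : Fin 3 ⊕ Fin 3, x = bvtx n hn w → x.1.val ≤ 3 := by
      rintro w rfl; exact bvtx_val_le hn w
    rcases bigP_support hn u v h x hx with h1 | h1 | ⟨h1, h2⟩ <;>
      rcases bigP_support hn u' v' h' x hx' with h1' | h1' | ⟨h1', h2'⟩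
    · exact ⟨Or.inl h1, Or.inl h1'⟩
    · exact ⟨Or.inl h1, Or.inr h1'⟩
    · exact absurd h1' (by have := hval u h1; omega)
    · exact ⟨Or.inr h1, Or.inl h1'⟩
    · exact ⟨Or.inr h1, Or.inr h1'⟩
    · exact absurd h1' (by have := hval v h1; omega)
    · exact absurd h1 (by have := hval u' h1'; omega)
    · exact absurd h1 (by have := hval v' h1'; omega)
    · exact absurd (h2.trans h2'.symm) hne

end Subdiv3

/-- for `n ≥ 4`, the graph `C_n[K̄_2]` contains a subdivision of
`K_{3,3}`, and hence is not planar (has no 2-cell embedding of genus 0, i.e.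
Euler characteristic 2). -/
theorem cycle_lexProd_contains_K33_subdivision (n : ℕ) (hn : 4 ≤ n) :
    ContainsSubdivision (completeBipartiteGraph (Fin 3) (Fin 3))
      (lexProd (SimpleGraph.cycleGraph n) (⊥ : SimpleGraph (Fin 2))) ∧
    ¬ ∃ rs : RotationSystem
        (lexProd (SimpleGraph.cycleGraph n) (⊥ : SimpleGraph (Fin 2))),
      rs.eulerChar = 2 := by
  haveI : NeZero n := ⟨by omega⟩
  exact ⟨contains_subdiv hn, no_planar_embedding hn⟩
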